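/- Let A be a commutative ℚ-algebra and let Δ = ∑ Δ′ ⊗ Δ″ ∈ A ⊗ A satisfy: (i) τΔ = −Δ, where τ is the flip of the two tensor factors; (ii) (a ⊗ 1)·Δ = (1 ⊗ a)·Δ for every a ∈ A; and (iii) ∑ Δ′Δ″ = 0 in A (vanishing Euler class). Fix an integer r ≥ 1. Let T := A^{⊗r}, for 1 ≤ i ≤ r let μ_i : A → T be the ℚ-algebra map inserting into the i-th tensor factor (with units elsewhere), and for i ≠ j set Δ_{ij} := ∑ μ_i(Δ′)·μ_j(Δ″) ∈ T. Let B be the polynomial T-algebra on variables x_{ij} indexed by pairs 1 ≤ i < j ≤ r, and set ω_{ij} := x_{ij} for i < j and ω_{ij} := −x_{ji} for i > j. Let I ⊆ B be the ideal generated by: ω_{ij}·ω_{ij} for all i ≠ j; the Arnold elements ω_{ij}ω_{jk} + ω_{jk}ω_{ki} + ω_{ki}ω_{ij} for all pairwise distinct i, j, k; and (μ_i(a) − μ_j(a))·ω_{ij} for all a ∈ A and all i ≠ j. Let d : B → B be the unique T-linear derivation with d(x_{ij}) = Δ_{ij} for i < j. Then d(I) ⊆ I; in particular d descends to a derivation of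 the quotient algebra B/I. -/

import Mathlib

set_option maxHeartbeats 1000000


open scoped TensorProduct

noncomputable section

namespace LSModel

variable {A : Type*} [CommRing A] [Algebra ℚ A] (r : ℕ)

/-- The index set of the polynomial generators `x_{ij}`, one for each pair `1 ≤ i < j ≤ r`. -/
abbrev PairIdx : Type := { p : Fin r × Fin r // p.1 < p.2 }

/-- `T := A^{⊗r}`, the `r`-fold tensor power of `A` over `ℚ`. -/
abbrev TPow (A : Type*) [CommRing A] [Algebra ℚ A] (r : ℕ) : Type _ :=
  ⨂[ℚ] (_ : Fin r), A

/-- `μ_i : A → A^{⊗r}`, the ℚ-algebra map inserting into the `i`-th tensor factor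
(with units elsewhere). -/
abbrev ins (i : Fin r) : A →ₐ[ℚ] TPow A r :=
  PiTensorProduct.singleAlgHom (R := ℚ) (A := fun _ : Fin r => A) i

/-- `Δ_{ij} := ∑ μ_i(Δ′)·μ_j(Δ″) ∈ T`, the image of `Δ ∈ A ⊗ A` under `μ_i ⊗ μ_j`. -/
abbrev diag (Δ : A ⊗[ℚ] A) (i j : Fin r) : TPow A r :=
  Algebra.TensorProduct.productMap (ins (A := A) r i) (ins r j) Δ

/-- The polynomial `T`-algebra `B` on the generators `x_{ij}`, `i < j`. -/
abbrev PolyB (A : Type*) [CommRing A] [Algebra ℚ A] (r : ℕ) : Type _ :=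
  MvPolynomial (PairIdx r) (TPow A r)

/-- `ω_{ij}`: the generator `x_{ij}` for `i < j`, `-x_{ji}` for `i > j` (and `0` for `i = j`,
a value which is never used). -/
def omega (i j : Fin r) : PolyB A r :=
  if h : i < j then MvPolynomial.X ⟨(i, j), h⟩
  else if h : j < i then -MvPolynomial.X ⟨(j, i), h⟩ else 0

/-- The ideal `I ⊆ B` generated by the squares `ω_{ij}²`, the Arnold elements
`ω_{ij}ω_{jk} + ω_{jk}ω_{ki} + ω_{ki}ω_{ij}`, and the elements `(μ_i(a) - μ_j(a))·ω_{ij}`. -/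
def relIdeal : Ideal (PolyB A r) :=
  Ideal.span
    ({b | ∃ i j : Fin r, i ≠ j ∧ b = omega r i j * omega r i j} ∪
     {b | ∃ i j k : Fin r, i ≠ j ∧ j ≠ k ∧ i ≠ k ∧
        b = omega r i j * omega r j k + omega r j k * omega r k i
            + omega r k i * omega r i j} ∪
     {b | ∃ (a : A) (i j : Fin r), i ≠ j ∧
        b = (MvPolynomial.C (ins r i a) - MvPolynomial.C (ins r j a)) * omega r i j})

/-- The unique `T`-linear derivation `d` of `B` with `d(x_{ij}) = Δ_{ij}`. -/
def diffB (Δ : A ⊗[ℚ] A) : Derivation (TPow A r) (PolyB A r) (PolyB A r) :=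
  MvPolynomial.mkDerivation (TPow A r)
    (fun p : PairIdx r => MvPolynomial.C (diag r Δ p.val.1 p.val.2))

-- auxiliary lemmas

lemma productMap_comm_apply {S : Type*} [CommRing S] [Algebra ℚ S]
    (f g : A →ₐ[ℚ] S) (t : A ⊗[ℚ] A) :
    Algebra.TensorProduct.productMap f g (TensorProduct.comm ℚ A A t) =
      Algebra.TensorProduct.productMap g f t := by
  induction t using TensorProduct.induction_on with
  | zero => simp
  | tmul x y => simp [Algebra.TensorProduct.productMap_apply_tmul, mul_comm]
  | add s t hs ht => simp [map_add, hs, ht]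

lemma productMap_self_apply {S : Type*} [CommRing S] [Algebra ℚ S]
    (f : A →ₐ[ℚ] S) (t : A ⊗[ℚ] A) :
    Algebra.TensorProduct.productMap f f t = f (LinearMap.mul' ℚ A t) := by
  induction t using TensorProduct.induction_on with
  | zero => simp
  | tmul x y => simp [Algebra.TensorProduct.productMap_apply_tmul, LinearMap.mul'_apply, map_mul]
  | add s t hs ht => simp [map_add, hs, ht]

variable {Δ : A ⊗[ℚ] A}

lemma diag_neg (hΔanti : TensorProduct.comm ℚ A A Δ = -Δ) (i j : Fin r) :
    diag r Δ j i = - diag r Δ i j := by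
  have h := productMap_comm_apply (ins r i) (ins r j) Δ
  rw [hΔanti, map_neg] at h
  exact h.symm.trans rfl

lemma d_omega (hΔanti : TensorProduct.comm ℚ A A Δ = -Δ) {i j : Fin r} (hij : i ≠ j) :
    diffB r Δ (omega r i j) = MvPolynomial.C (diag r Δ i j) := by
  unfold omega diffB
  rcases lt_or_gt_of_ne hij with h | h
  · rw [dif_pos h, MvPolynomial.mkDerivation_X]
  · rw [dif_neg (not_lt.mpr h.le), dif_pos h, map_neg, MvPolynomial.mkDerivation_X]
    rw [diag_neg r hΔanti i j, map_neg, neg_neg]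

lemma mem_rel3 {a : A} {i j : Fin r} (hij : i ≠ j) :
    (MvPolynomial.C (ins r i a) - MvPolynomial.C (ins r j a)) * omega r i j
      ∈ relIdeal (A := A) r :=
  Ideal.subset_span (Or.inr ⟨a, i, j, hij, rfl⟩)

/-- replacing the right leg along `ω_{pq}`. -/
lemma move_right (a p q : Fin r) (hpq : p ≠ q) (t : A ⊗[ℚ] A) :
    (MvPolynomial.C (Algebra.TensorProduct.productMap (ins (A := A) r a) (ins r p) t)
      - MvPolynomial.C (Algebra.TensorProduct.productMap (ins (A := A) r a) (ins r q) t))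
      * omega r p q ∈ relIdeal (A := A) r := by
  induction t using TensorProduct.induction_on with
  | zero => simpa using (relIdeal (A := A) r).zero_mem
  | tmul x y =>
      have key : (MvPolynomial.C (Algebra.TensorProduct.productMap (ins (A := A) r a) (ins r p) (x ⊗ₜ[ℚ] y))
          - MvPolynomial.C (Algebra.TensorProduct.productMap (ins (A := A) r a) (ins r q) (x ⊗ₜ[ℚ] y)))
          * omega r p q
          = MvPolynomial.C (ins r a x) *
            ((MvPolynomial.C (ins r p y) - MvPolynomial.C (ins r q y)) * omega r p q) := by
        rw [Algebra.TensorProduct.productMap_apply_tmul,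
          Algebra.TensorProduct.productMap_apply_tmul, map_mul, map_mul, ← mul_sub, mul_assoc]
      rw [key]
      exact Ideal.mul_mem_left _ _ (mem_rel3 r hpq)
  | add s t hs ht =>
      have key : (MvPolynomial.C (Algebra.TensorProduct.productMap (ins (A := A) r a) (ins r p) (s + t))
          - MvPolynomial.C (Algebra.TensorProduct.productMap (ins (A := A) r a) (ins r q) (s + t)))
          * omega r p q
          = (MvPolynomial.C (Algebra.TensorProduct.productMap (ins (A := A) r a) (ins r p) s)
              - MvPolynomial.C (Algebra.TensorProduct.productMap (ins (A := A) r a) (ins r q) s))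
              * omega r p q
          + (MvPolynomial.C (Algebra.TensorProduct.productMap (ins (A := A) r a) (ins r p) t)
              - MvPolynomial.C (Algebra.TensorProduct.productMap (ins (A := A) r a) (ins r q) t))
              * omega r p q := by
        rw [map_add, map_add, map_add, map_add, sub_mul, sub_mul, sub_mul,
          add_mul, add_mul]
        abel
      rw [key]
      exact add_mem hs ht

lemma mem_sq (hΔanti : TensorProduct.comm ℚ A A Δ = -Δ)
    (hEuler : LinearMap.mul' ℚ A Δ = 0) {i j : Fin r} (hij : i ≠ j) :
    MvPolynomial.C (diag r Δ i j) * omega r i j ∈ relIdeal (A := A) r := by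
  have h := move_right r i i j hij Δ
  rw [productMap_self_apply, hEuler] at h
  simp only [LinearMap.zero_apply, map_zero, zero_sub] at h
  have h2 : MvPolynomial.C (diag r Δ i j) * omega r i j
      = -(-MvPolynomial.C ((Algebra.TensorProduct.productMap (ins (A := A) r i) (ins r j)) Δ)
          * omega r i j) := by ring
  rw [h2]
  exact neg_mem h


/-- Let `A` be a commutative ℚ-algebra and `Δ ∈ A ⊗ A` an antisymmetric diagonal element
(`τΔ = -Δ`, `(a⊗1)·Δ = (1⊗a)·Δ` for all `a`, and vanishing Euler class `∑Δ′Δ″ = 0`).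
Then the relation ideal `I` of the Lambrechts–Stanley type algebra on `r ≥ 1` points is a
differential ideal: `d(I) ⊆ I` for the `T`-linear derivation `d` with `d(x_{ij}) = Δ_{ij}`;
in particular `d` descends to the quotient `B/I`. -/
theorem relIdeal_is_differential
    (Δ : A ⊗[ℚ] A)
    (hΔanti : TensorProduct.comm ℚ A A Δ = -Δ)
    (hΔdiag : ∀ a : A, ((a ⊗ₜ[ℚ] (1 : A)) * Δ : A ⊗[ℚ] A) = ((1 : A) ⊗ₜ[ℚ] a) * Δ)
    (hEuler : LinearMap.mul' ℚ A Δ = 0)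
    (hr : 1 ≤ r) :
    ∀ b ∈ relIdeal (A := A) r, diffB r Δ b ∈ relIdeal (A := A) r := by
  intro b hb
  rw [relIdeal] at hb
  refine Submodule.span_induction ?_ ?_ ?_ ?_ hb
  · -- generators
    rintro g (hg | hg)
    · rcases hg with hg | hg
      · -- squares
        obtain ⟨i, j, hij, rfl⟩ := hg
        rw [Derivation.leibniz, d_omega r hΔanti hij, smul_eq_mul]
        exact add_mem
          (by rw [mul_comm]; exact mem_sq r hΔanti hEuler hij)
          (by rw [mul_comm]; exact mem_sq r hΔanti hEuler hij)
      · -- Arnold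
        obtain ⟨i, j, k, hij, hjk, hik, rfl⟩ := hg
        have m1 := move_right r i j k hjk Δ
        have m2 := move_right r j k i (fun h => hik (h.symm)) Δ
        have m3 := move_right r k i j hij Δ
        have key : diffB r Δ (omega r i j * omega r j k + omega r j k * omega r k i
              + omega r k i * omega r i j)
            = (MvPolynomial.C (diag r Δ i j) - MvPolynomial.C (diag r Δ i k)) * omega r j k
            + (MvPolynomial.C (diag r Δ j k) - MvPolynomial.C (diag r Δ j i)) * omega r k i
            + (MvPolynomial.C (diag r Δ k i) - MvPolynomial.C (diag r Δ k j)) * omega r i j := by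
          rw [map_add, map_add, Derivation.leibniz, Derivation.leibniz, Derivation.leibniz,
            d_omega r hΔanti hij, d_omega r hΔanti hjk, d_omega r hΔanti (fun h => hik h.symm),
            diag_neg r hΔanti i k, diag_neg r hΔanti i j, diag_neg r hΔanti j k]
          simp only [smul_eq_mul, map_neg]
          ring
        rw [key]
        exact add_mem (add_mem m1 m2) m3
      -- third family
    · obtain ⟨a, i, j, hij, rfl⟩ := hg
      rw [Derivation.leibniz, d_omega r hΔanti hij, smul_eq_mul]
      have hdC : ∀ t : TPow A r, diffB r Δ (MvPolynomial.C t) = 0 := fun t => by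
        rw [← MvPolynomial.algebraMap_eq]; exact Derivation.map_algebraMap _ t
      have h0 : ((MvPolynomial.C (ins r i a) - MvPolynomial.C (ins r j a))
          * MvPolynomial.C (diag r Δ i j) : PolyB A r) = 0 := by
        rw [sub_mul, ← map_mul, ← map_mul]
        have hmul : ins r i a * diag r Δ i j = ins r j a * diag r Δ i j := by
          have h1 := congrArg (Algebra.TensorProduct.productMap (ins (A := A) r i) (ins r j)) (hΔdiag a)
          rw [map_mul, map_mul] at h1
          simpa [Algebra.TensorProduct.productMap_apply_tmul, map_one] using h1
        rw [hmul, sub_self]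
      rw [h0, map_sub, hdC, hdC, sub_self, smul_zero, add_zero]
      exact (relIdeal (A := A) r).zero_mem
  · simpa using (relIdeal (A := A) r).zero_mem
  · intro x y _ _ hx hy
    rw [map_add]; exact add_mem hx hy
  · intro c x hx hdx
    have hx' : x ∈ relIdeal (A := A) r := hx
    rw [smul_eq_mul, Derivation.leibniz]
    simp only [smul_eq_mul]
    exact add_mem (Ideal.mul_mem_left _ _ hdx) (Ideal.mul_mem_right _ _ hx')

end LSModel
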